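/- Let X be a parafinite simplicial set with simplicial Hilbert space H, Q_{S,n} = Σ_{i=0}^n (−1)^i S_{n,i} the degeneracy coboundary operator, and H_{SS,n} = Q_{S,n}† Q_{S,n} + Q_{S,n−1} Q_{S,n−1}†. Then H_{SS,n} ≥ 1 (as operators on H_n); in particular ker H_{SS,n} = 0. -/

import Mathlib

structure SimplicialSet where
  X : ℕ → Type
  d : (n : ℕ) → ℕ → X (n+1) → X n
  s : (n : ℕ) → ℕ → X n → X (n+1)
  dd : ∀ (n i j : ℕ), i < j → j ≤ n+2 → ∀ x : X (n+2),
    d n i (d (n+1) j x) = d n (j-1) (d (n+1) i x)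
  ds_lt : ∀ (n i j : ℕ), i < j → j ≤ n+1 → ∀ x : X (n+1),
    d (n+1) i (s (n+1) j x) = s n (j-1) (d n i x)
  ds_eq : ∀ (n j : ℕ), j ≤ n → ∀ x : X n, d n j (s n j x) = x
  ds_eq' : ∀ (n j : ℕ), j ≤ n → ∀ x : X n, d n (j+1) (s n j x) = x
  ds_gt : ∀ (n i j : ℕ), j+1 < i → i ≤ n+2 → ∀ x : X (n+1),
    d (n+1) i (s (n+1) j x) = s n j (d n (i-1) x)
  ss : ∀ (n i j : ℕ), i ≤ j → j ≤ n → ∀ x : X n,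
    s (n+1) i (s n j x) = s (n+1) (j+1) (s n i x)

/-- The degeneracy operator `S_{n,i}` on the simplicial Hilbert space, defined on
the simplex basis by `S_{n,i}|σ⟩ = |s_{n,i} σ⟩`. -/
noncomputable def Sop (G : SimplicialSet) [∀ n, Fintype (G.X n)]
    [∀ n, DecidableEq (G.X n)] (n i : ℕ) :
    EuclideanSpace ℂ (G.X n) →ₗ[ℂ] EuclideanSpace ℂ (G.X (n+1)) :=
  (PiLp.basisFun 2 ℂ (G.X n)).constr ℂ fun σ => EuclideanSpace.single (G.s n i σ) 1

/-- The degeneracy coboundary operator `Q_{S,n} = Σ_{i=0}^n (-1)^i S_{n,i}`. -/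
noncomputable def QS (G : SimplicialSet) [∀ n, Fintype (G.X n)]
    [∀ n, DecidableEq (G.X n)] (n : ℕ) :
    EuclideanSpace ℂ (G.X n) →ₗ[ℂ] EuclideanSpace ℂ (G.X (n+1)) :=
  ∑ i ∈ Finset.range (n+1), ((-1 : ℂ)^i) • Sop G n i

/-- The degeneracy Hodge Laplacian
`H_{SS,n} = Q_{S,n}† Q_{S,n} + Q_{S,n-1} Q_{S,n-1}†`
(second term absent for `n = 0`). -/
noncomputable def HSS (G : SimplicialSet) [∀ n, Fintype (G.X n)]
    [∀ n, DecidableEq (G.X n)] :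
    (n : ℕ) → (EuclideanSpace ℂ (G.X n) →ₗ[ℂ] EuclideanSpace ℂ (G.X n))
  | 0 => LinearMap.adjoint (QS G 0) ∘ₗ QS G 0
  | n+1 => LinearMap.adjoint (QS G (n+1)) ∘ₗ QS G (n+1)
      + QS G n ∘ₗ LinearMap.adjoint (QS G n)

set_option linter.unusedSectionVars false

variable (G : SimplicialSet) [∀ n, Fintype (G.X n)] [∀ n, DecidableEq (G.X n)]

lemma s_inj {n i : ℕ} (h : i ≤ n) : Function.Injective (G.s n i) := by
  intro a b hab
  have := congrArg (G.d n i) hab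
  rwa [G.ds_eq n i h, G.ds_eq n i h] at this

lemma Sop_single (n i : ℕ) (σ : G.X n) :
    Sop G n i (EuclideanSpace.single σ 1) = EuclideanSpace.single (G.s n i σ) 1 := by
  have : (PiLp.basisFun 2 ℂ (G.X n)) σ = EuclideanSpace.single σ 1 := by
    rw [PiLp.basisFun_apply]
  rw [← this, Sop, Module.Basis.constr_basis]

lemma adjoint_Sop_apply (n i : ℕ) (x : EuclideanSpace ℂ (G.X (n+1))) (ρ : G.X n) :
    (LinearMap.adjoint (Sop G n i) x) ρ = x (G.s n i ρ) := by
  have h1 : (LinearMap.adjoint (Sop G n i) x) ρ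
      = inner ℂ (EuclideanSpace.single ρ (1:ℂ)) (LinearMap.adjoint (Sop G n i) x) := by
    rw [EuclideanSpace.inner_single_left]; simp
  rw [h1, LinearMap.adjoint_inner_right, Sop_single, EuclideanSpace.inner_single_left]
  simp

lemma Sop_apply (n i : ℕ) (x : EuclideanSpace ℂ (G.X n)) :
    Sop G n i x = ∑ σ : G.X n, x σ • EuclideanSpace.single (G.s n i σ) (1:ℂ) := by
  rw [Sop, Module.Basis.constr_apply_fintype]
  refine Finset.sum_congr rfl fun σ _ => ?_
  congr 1

lemma adjoint_Sop_comp_self (n i : ℕ) (h : i ≤ n) :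
    LinearMap.adjoint (Sop G n i) ∘ₗ Sop G n i = LinearMap.id := by
  refine (PiLp.basisFun 2 ℂ (G.X n)).ext fun τ => ?_
  have hb : (PiLp.basisFun 2 ℂ (G.X n)) τ = EuclideanSpace.single τ 1 := by
    rw [PiLp.basisFun_apply]
  rw [hb]
  ext ρ
  rw [LinearMap.comp_apply, adjoint_Sop_apply, Sop_single]
  simp only [LinearMap.id_coe, id_eq, EuclideanSpace.single_apply]
  by_cases hρτ : ρ = τ
  · simp [hρτ]
  · have : G.s n i ρ ≠ G.s n i τ := fun hc => hρτ (s_inj G h hc)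
    simp [hρτ, this]

lemma cross (n i k : ℕ) (hik : i ≤ k) (hk : k ≤ n) :
    LinearMap.adjoint (Sop G (n+1) i) ∘ₗ Sop G (n+1) (k+1)
      = Sop G n k ∘ₗ LinearMap.adjoint (Sop G n i) := by
  refine (PiLp.basisFun 2 ℂ (G.X (n+1))).ext fun τ => ?_
  have hb : (PiLp.basisFun 2 ℂ (G.X (n+1))) τ = EuclideanSpace.single τ 1 := by
    rw [PiLp.basisFun_apply]
  rw [hb]
  ext ρ₀
  rw [LinearMap.comp_apply, LinearMap.comp_apply, adjoint_Sop_apply, Sop_single]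
  have hrhs : (Sop G n k (LinearMap.adjoint (Sop G n i) (EuclideanSpace.single τ 1))) ρ₀
      = ∑ σ : G.X n, (if G.s n i σ = τ then (1:ℂ) else 0) * (if ρ₀ = G.s n k σ then 1 else 0) := by
    rw [Sop_apply]
    have : ∀ σ : G.X n,
        ((LinearMap.adjoint (Sop G n i) (EuclideanSpace.single τ 1)) σ
          • EuclideanSpace.single (G.s n k σ) (1:ℂ)) ρ₀
        = (if G.s n i σ = τ then (1:ℂ) else 0) * (if ρ₀ = G.s n k σ then 1 else 0) := by
      intro σ
      rw [PiLp.smul_apply, adjoint_Sop_apply, EuclideanSpace.single_apply,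
        EuclideanSpace.single_apply, smul_eq_mul]
    rw [show ((∑ σ : G.X n, (LinearMap.adjoint (Sop G n i) (EuclideanSpace.single τ 1)) σ
          • EuclideanSpace.single (G.s n k σ) (1:ℂ)) ρ₀)
        = ∑ σ : G.X n, ((LinearMap.adjoint (Sop G n i) (EuclideanSpace.single τ 1)) σ
          • EuclideanSpace.single (G.s n k σ) (1:ℂ)) ρ₀ from by rw [WithLp.ofLp_sum, Finset.sum_apply]]
    exact Finset.sum_congr rfl fun σ _ => this σ
  rw [hrhs, EuclideanSpace.single_apply]
  by_cases h : G.s (n+1) i ρ₀ = G.s (n+1) (k+1) τ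
  · -- unique σ = d n i τ
    have hτ : τ = G.s n i (G.d n (k+1) ρ₀) := by
      have h1 := congrArg (G.d (n+1) (k+2)) h
      rw [G.ds_eq' (n+1) (k+1) (by omega), G.ds_gt n (k+2) i (by omega) (by omega),
        show k+2-1 = k+1 from rfl] at h1
      exact h1.symm
    have hρ₀ : ρ₀ = G.s n k (G.d n i τ) := by
      have h1 := congrArg (G.d (n+1) i) h
      rwa [G.ds_eq (n+1) i (by omega), G.ds_lt n i (k+1) (by omega) (by omega),
        Nat.add_sub_cancel] at h1
    have key : ∀ σ : G.X n,
        (if G.s n i σ = τ then (1:ℂ) else 0) * (if ρ₀ = G.s n k σ then 1 else 0)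
        = if σ = G.d n i τ then 1 else 0 := by
      intro σ
      by_cases hσ : σ = G.d n i τ
      · subst hσ
        have hdi : G.d n i τ = G.d n (k+1) ρ₀ := by
          conv_lhs => rw [hτ]
          rw [G.ds_eq n i (by omega)]
        have e1 : G.s n i (G.d n i τ) = τ := by rw [hdi]; exact hτ.symm
        have e2 : ρ₀ = G.s n k (G.d n i τ) := hρ₀
        simp [e1, e2]
      · have : G.s n i σ ≠ τ := by
          intro hc
          apply hσ
          have := congrArg (G.d n i) hc
          rwa [G.ds_eq n i (by omega)] at this
        simp [this, hσ]
    rw [if_pos h]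
    refine Eq.symm ?_
    calc (∑ σ : G.X n, (if G.s n i σ = τ then (1:ℂ) else 0) * (if ρ₀ = G.s n k σ then 1 else 0))
        = ∑ σ : G.X n, if σ = G.d n i τ then (1:ℂ) else 0 :=
          Finset.sum_congr rfl fun σ _ => key σ
      _ = 1 := by simp
  · rw [if_neg h]
    refine Eq.symm (Finset.sum_eq_zero fun σ _ => ?_)
    by_cases h1 : G.s n i σ = τ
    · by_cases h2 : ρ₀ = G.s n k σ
      · exfalso
        apply h
        rw [h2, ← h1, ← G.ss n i k hik hk]
      · simp [h2]
    · simp [h1]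

lemma cross' (n i k : ℕ) (hik : i ≤ k) (hk : k ≤ n) :
    LinearMap.adjoint (Sop G (n+1) (k+1)) ∘ₗ Sop G (n+1) i
      = Sop G n i ∘ₗ LinearMap.adjoint (Sop G n k) := by
  have h := congrArg (LinearMap.adjoint) (cross G n i k hik hk)
  rwa [LinearMap.adjoint_comp, LinearMap.adjoint_comp, LinearMap.adjoint_adjoint,
    LinearMap.adjoint_adjoint] at h

lemma square_split {M : Type*} [AddCommMonoid M] (m : ℕ) (f : ℕ → ℕ → M) :
    ∑ i ∈ Finset.range m, ∑ j ∈ Finset.range m, f i j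
      = (∑ i ∈ Finset.range m, f i i)
        + ∑ j ∈ Finset.range m, ∑ i ∈ Finset.range j, (f i j + f j i) := by
  induction m with
  | zero => simp
  | succ m ih =>
    simp only [Finset.sum_range_succ, Finset.sum_add_distrib] at *
    rw [ih]
    abel

lemma sum_comp' {α M N P : Type*} [AddCommMonoid M] [AddCommMonoid N] [AddCommMonoid P]
    [Module ℂ M] [Module ℂ N] [Module ℂ P] (s : Finset α) (f : α → (M →ₗ[ℂ] N))
    (g : P →ₗ[ℂ] M) : (∑ i ∈ s, f i) ∘ₗ g = ∑ i ∈ s, (f i ∘ₗ g) := by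
  refine LinearMap.ext fun x => ?_
  simp [LinearMap.sum_apply]

lemma comp_sum' {α M N P : Type*} [AddCommMonoid M] [AddCommMonoid N] [AddCommMonoid P]
    [Module ℂ M] [Module ℂ N] [Module ℂ P] (s : Finset α) (f : α → (M →ₗ[ℂ] N))
    (g : N →ₗ[ℂ] P) : g ∘ₗ (∑ i ∈ s, f i) = ∑ i ∈ s, (g ∘ₗ f i) := by
  refine LinearMap.ext fun x => ?_
  simp [LinearMap.sum_apply]

lemma adjoint_Sop_smul (n : ℕ) (c : ℂ) (hc : star c = c) (A : EuclideanSpace ℂ (G.X n) →ₗ[ℂ] EuclideanSpace ℂ (G.X (n+1))) :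
    LinearMap.adjoint (c • A) = c • LinearMap.adjoint A := by
  rw [show LinearMap.adjoint (c • A) = (starRingEnd ℂ c) • LinearMap.adjoint A from
    map_smulₛₗ LinearMap.adjoint c A]
  rw [show starRingEnd ℂ c = c from hc]

lemma adjoint_QS (n : ℕ) : LinearMap.adjoint (QS G n)
    = ∑ i ∈ Finset.range (n+1), ((-1 : ℂ)^i) • LinearMap.adjoint (Sop G n i) := by
  rw [QS, map_sum]
  refine Finset.sum_congr rfl fun i _ => ?_
  exact adjoint_Sop_smul G n _ (by simp) _

lemma adjQQ (n : ℕ) : LinearMap.adjoint (QS G n) ∘ₗ QS G n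
    = ∑ i ∈ Finset.range (n+1), ∑ j ∈ Finset.range (n+1),
        ((-1 : ℂ)^(i+j)) • (LinearMap.adjoint (Sop G n i) ∘ₗ Sop G n j) := by
  rw [adjoint_QS, QS, sum_comp']
  refine Finset.sum_congr rfl fun i _ => ?_
  rw [LinearMap.smul_comp, comp_sum', Finset.smul_sum]
  refine Finset.sum_congr rfl fun j _ => ?_
  rw [LinearMap.comp_smul, smul_smul, ← pow_add]

lemma QQadj (n : ℕ) : QS G n ∘ₗ LinearMap.adjoint (QS G n)
    = ∑ i ∈ Finset.range (n+1), ∑ j ∈ Finset.range (n+1),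
        ((-1 : ℂ)^(i+j)) • (Sop G n i ∘ₗ LinearMap.adjoint (Sop G n j)) := by
  rw [adjoint_QS, QS, sum_comp']
  refine Finset.sum_congr rfl fun i _ => ?_
  rw [LinearMap.smul_comp, comp_sum', Finset.smul_sum]
  refine Finset.sum_congr rfl fun j _ => ?_
  rw [LinearMap.comp_smul, smul_smul, ← pow_add]

lemma neg_one_pow_even (i : ℕ) : ((-1 : ℂ))^(i+i) = 1 := by
  rw [show i+i = 2*i by omega, pow_mul]; simp

lemma key (n : ℕ) :
    LinearMap.adjoint (QS G (n+1)) ∘ₗ QS G (n+1) + QS G n ∘ₗ LinearMap.adjoint (QS G n)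
      = ((n+2 : ℂ)) • (LinearMap.id : EuclideanSpace ℂ (G.X (n+1)) →ₗ[ℂ] EuclideanSpace ℂ (G.X (n+1)))
        - ∑ i ∈ Finset.range (n+1), (Sop G n i ∘ₗ LinearMap.adjoint (Sop G n i)) := by
  set T : ℕ → ℕ → (EuclideanSpace ℂ (G.X (n+1)) →ₗ[ℂ] EuclideanSpace ℂ (G.X (n+1))) :=
    fun a b => Sop G n b ∘ₗ LinearMap.adjoint (Sop G n a) with hT
  have hA : LinearMap.adjoint (QS G (n+1)) ∘ₗ QS G (n+1)
      = ((n+2 : ℂ)) • LinearMap.id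
        + ∑ k ∈ Finset.range (n+1),
            ((∑ i ∈ Finset.range k, (-((-1 : ℂ)^(i+k))) • (T i k + T k i))
              + (-(T k k + T k k))) := by
    rw [adjQQ, square_split]
    congr 1
    · -- diagonal
      have : ∀ i ∈ Finset.range (n+2),
          ((-1 : ℂ)^(i+i)) • (LinearMap.adjoint (Sop G (n+1) i) ∘ₗ Sop G (n+1) i)
            = (LinearMap.id : EuclideanSpace ℂ (G.X (n+1)) →ₗ[ℂ] EuclideanSpace ℂ (G.X (n+1))) := by
        intro i hi
        rw [adjoint_Sop_comp_self G (n+1) i (Nat.lt_succ_iff.mp (Finset.mem_range.mp hi)),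
          neg_one_pow_even, one_smul]
      rw [Finset.sum_congr rfl this, Finset.sum_const, Finset.card_range,
        ← Nat.cast_smul_eq_nsmul ℂ (n+2)]
      norm_num
    · -- off-diagonal
      rw [Finset.sum_range_succ' _ (n+1)]
      simp only [Finset.range_zero, Finset.sum_empty, add_zero]
      refine Finset.sum_congr rfl fun k hk => ?_
      have hk' : k ≤ n := Nat.lt_succ_iff.mp (Finset.mem_range.mp hk)
      rw [Finset.sum_range_succ]
      congr 1
      · refine Finset.sum_congr rfl fun i hi => ?_
        have hik : i ≤ k := le_of_lt (Finset.mem_range.mp hi)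
        rw [cross G n i k hik hk', cross' G n i k hik hk',
          show i+(k+1) = (i+k)+1 by omega, show (k+1)+i = (i+k)+1 by omega, pow_succ]
        module
      · rw [cross G n k k le_rfl hk', cross' G n k k le_rfl hk',
          show k+(k+1) = (k+k)+1 by omega, show (k+1)+k = (k+k)+1 by omega, pow_succ,
          neg_one_pow_even]
        module
  have hB : QS G n ∘ₗ LinearMap.adjoint (QS G n)
      = (∑ i ∈ Finset.range (n+1), T i i)
        + ∑ k ∈ Finset.range (n+1),
            ∑ i ∈ Finset.range k, (((-1 : ℂ)^(i+k)) • (T k i + T i k)) := by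
    rw [QQadj, square_split (n+1) (fun i j => ((-1 : ℂ)^(i+j)) • T j i)]
    congr 1
    · exact Finset.sum_congr rfl fun i _ => by rw [neg_one_pow_even, one_smul]
    · refine Finset.sum_congr rfl fun k _ => Finset.sum_congr rfl fun i _ => ?_
      rw [Nat.add_comm k i, smul_add]
  rw [hA, hB]
  have e1 : ∑ k ∈ Finset.range (n+1),
      ((∑ i ∈ Finset.range k, (-((-1 : ℂ)^(i+k))) • (T i k + T k i)) + (-(T k k + T k k)))
    = (∑ k ∈ Finset.range (n+1), ∑ i ∈ Finset.range k, (-((-1 : ℂ)^(i+k))) • (T i k + T k i))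
      + ∑ k ∈ Finset.range (n+1), (-(T k k + T k k)) := Finset.sum_add_distrib
  have hcancel : (∑ k ∈ Finset.range (n+1), ∑ i ∈ Finset.range k, (-((-1 : ℂ)^(i+k))) • (T i k + T k i))
      = -∑ k ∈ Finset.range (n+1), ∑ i ∈ Finset.range k, (((-1 : ℂ)^(i+k)) • (T k i + T i k)) := by
    refine Eq.trans (Finset.sum_congr rfl fun k _ => ?_) (Finset.sum_neg_distrib _)
    refine Eq.trans (Finset.sum_congr rfl fun i _ => ?_) (Finset.sum_neg_distrib _)
    rw [show T k i + T i k = T i k + T k i from add_comm _ _, neg_smul]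
  have e2 : ∑ k ∈ Finset.range (n+1), (-(T k k + T k k))
      = -((∑ k ∈ Finset.range (n+1), T k k) + ∑ k ∈ Finset.range (n+1), T k k) := by
    rw [Finset.sum_neg_distrib, Finset.sum_add_distrib]
  rw [e1, hcancel, e2]
  abel

lemma QS_zero : QS G 0 = Sop G 0 0 := by
  rw [QS]; simp

lemma norm_adjoint_Sop_le (n i : ℕ) (h : i ≤ n) (ψ : EuclideanSpace ℂ (G.X (n+1))) :
    ‖LinearMap.adjoint (Sop G n i) ψ‖ ≤ ‖ψ‖ := by
  set x := LinearMap.adjoint (Sop G n i) ψ with hx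
  have hSx : ‖Sop G n i x‖ = ‖x‖ := by
    have h1 : (inner ℂ (Sop G n i x) (Sop G n i x) : ℂ) = inner ℂ x x := by
      rw [← LinearMap.adjoint_inner_right]
      congr 1
      have := congrArg (fun (f : EuclideanSpace ℂ (G.X n) →ₗ[ℂ] EuclideanSpace ℂ (G.X n)) => f x)
        (adjoint_Sop_comp_self G n i h)
      simpa using this
    rw [@norm_eq_sqrt_re_inner ℂ, @norm_eq_sqrt_re_inner ℂ, h1]
  have h2 : ‖x‖^2 = (inner ℂ ψ (Sop G n i x) : ℂ).re := by
    rw [← LinearMap.adjoint_inner_left, ← hx, inner_self_eq_norm_sq_to_K]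
    norm_cast
  have h3 : (inner ℂ ψ (Sop G n i x) : ℂ).re ≤ ‖ψ‖ * ‖Sop G n i x‖ := by
    calc (inner ℂ ψ (Sop G n i x) : ℂ).re ≤ ‖(inner ℂ ψ (Sop G n i x) : ℂ)‖ := Complex.re_le_norm _
      _ ≤ ‖ψ‖ * ‖Sop G n i x‖ := norm_inner_le_norm _ _
  rw [hSx] at h3
  nlinarith [norm_nonneg x, norm_nonneg ψ, h2.trans_le h3]

lemma proj_bound (n i : ℕ) (h : i ≤ n) (ψ : EuclideanSpace ℂ (G.X (n+1))) :
    (inner ℂ ψ ((Sop G n i ∘ₗ LinearMap.adjoint (Sop G n i)) ψ) : ℂ).re ≤ ‖ψ‖^2 := by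
  have h1 : (inner ℂ ψ ((Sop G n i ∘ₗ LinearMap.adjoint (Sop G n i)) ψ) : ℂ)
      = inner ℂ (LinearMap.adjoint (Sop G n i) ψ) (LinearMap.adjoint (Sop G n i) ψ) := by
    rw [LinearMap.comp_apply, ← LinearMap.adjoint_inner_left]
  have h4 : (inner ℂ ψ ((Sop G n i ∘ₗ LinearMap.adjoint (Sop G n i)) ψ) : ℂ).re
      = ‖LinearMap.adjoint (Sop G n i) ψ‖^2 := by
    rw [h1, inner_self_eq_norm_sq_to_K]; norm_cast
  rw [h4]
  have := norm_adjoint_Sop_le G n i h ψ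
  nlinarith [norm_nonneg ψ, norm_nonneg (LinearMap.adjoint (Sop G n i) ψ)]

/-- The degeneracy Hodge Laplacian satisfies `H_{SS,n} ≥ 1`; in particular its
kernel is trivial. -/
theorem degeneracy_laplacian_ge_one (G : SimplicialSet) [∀ n, Fintype (G.X n)]
    [∀ n, DecidableEq (G.X n)] (n : ℕ) :
    (∀ ψ : EuclideanSpace ℂ (G.X n), ‖ψ‖^2 ≤ (inner ℂ ψ (HSS G n ψ) : ℂ).re) ∧
    LinearMap.ker (HSS G n) = ⊥ := by
  have hineq : ∀ ψ : EuclideanSpace ℂ (G.X n), ‖ψ‖^2 ≤ (inner ℂ ψ (HSS G n ψ) : ℂ).re := by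
    cases n with
    | zero =>
      intro ψ
      have h0 : HSS G 0 = LinearMap.id := by
        show LinearMap.adjoint (QS G 0) ∘ₗ QS G 0 = LinearMap.id
        rw [QS_zero, adjoint_Sop_comp_self G 0 0 le_rfl]
      rw [h0]
      have : (inner ℂ ψ (LinearMap.id (R := ℂ) ψ) : ℂ).re = ‖ψ‖^2 := by
        rw [LinearMap.id_apply, inner_self_eq_norm_sq_to_K]; norm_cast
      rw [this]
    | succ m =>
      intro ψ
      have hH : HSS G (m+1)
          = ((m+2 : ℂ)) • (LinearMap.id : EuclideanSpace ℂ (G.X (m+1)) →ₗ[ℂ] EuclideanSpace ℂ (G.X (m+1)))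
            - ∑ i ∈ Finset.range (m+1), (Sop G m i ∘ₗ LinearMap.adjoint (Sop G m i)) := by
        show LinearMap.adjoint (QS G (m+1)) ∘ₗ QS G (m+1) + QS G m ∘ₗ LinearMap.adjoint (QS G m) = _
        exact key G m
      rw [hH]
      have hψψ : (inner ℂ ψ ψ : ℂ) = ((‖ψ‖^2 : ℝ) : ℂ) := by
        rw [inner_self_eq_norm_sq_to_K]; norm_cast
      have hmain : (inner ℂ ψ ((((m+2 : ℂ)) • (LinearMap.id : EuclideanSpace ℂ (G.X (m+1)) →ₗ[ℂ] EuclideanSpace ℂ (G.X (m+1)))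
            - ∑ i ∈ Finset.range (m+1), (Sop G m i ∘ₗ LinearMap.adjoint (Sop G m i))) ψ) : ℂ).re
          = ((m:ℝ)+2) * ‖ψ‖^2
            - ∑ i ∈ Finset.range (m+1),
                (inner ℂ ψ ((Sop G m i ∘ₗ LinearMap.adjoint (Sop G m i)) ψ) : ℂ).re := by
        rw [LinearMap.sub_apply, inner_sub_right, Complex.sub_re]
        congr 1
        · rw [LinearMap.smul_apply, LinearMap.id_apply, inner_smul_right, hψψ]
          rw [show ((m : ℂ)+2) = (((m:ℝ)+2 : ℝ) : ℂ) by push_cast; ring]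
          rw [← Complex.ofReal_mul, Complex.ofReal_re]
        · rw [LinearMap.sum_apply, inner_sum, Complex.re_sum]
      rw [hmain]
      have hbd : ∑ i ∈ Finset.range (m+1),
            (inner ℂ ψ ((Sop G m i ∘ₗ LinearMap.adjoint (Sop G m i)) ψ) : ℂ).re
          ≤ (m+1 : ℝ) * ‖ψ‖^2 := by
        calc ∑ i ∈ Finset.range (m+1),
              (inner ℂ ψ ((Sop G m i ∘ₗ LinearMap.adjoint (Sop G m i)) ψ) : ℂ).re
            ≤ ∑ i ∈ Finset.range (m+1), ‖ψ‖^2 :=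
              Finset.sum_le_sum fun i hi =>
                proj_bound G m i (Nat.lt_succ_iff.mp (Finset.mem_range.mp hi)) ψ
          _ = (m+1 : ℝ) * ‖ψ‖^2 := by
              rw [Finset.sum_const, Finset.card_range, nsmul_eq_mul]; push_cast; ring
      have hm : (0:ℝ) ≤ (m:ℝ) := Nat.cast_nonneg m
      nlinarith [sq_nonneg ‖ψ‖]
  refine ⟨hineq, ?_⟩
  rw [Submodule.eq_bot_iff]
  intro ψ hψ
  have h0 : HSS G n ψ = 0 := LinearMap.mem_ker.mp hψ
  have h2 := hineq ψ
  rw [h0] at h2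
  simp only [inner_zero_right, Complex.zero_re] at h2
  have h3 : ‖ψ‖ = 0 := by nlinarith [norm_nonneg ψ]
  exact norm_eq_zero.mp h3
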